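/- Let A, B be real numbers with A > B > 0 and let x = (0, −(A+B) + √((A−B)(A+3B)), 2B) ∈ ℝ³. Then x induces a q-basis of ℝ³ (the vectors x, qx, q²x are linearly independent) and this q-basis is orthogonal with respect to g (the vectors x, qx, q²x are pairwise g-orthogonal). -/

import Mathlib

/-- The metric `g` determined by the circulant matrix with rows `(A,B,B),(B,A,B),(B,B,A)`. -/
def g (A B : ℝ) (x y : Fin 3 → ℝ) : ℝ :=
  A * (x 0 * y 0 + x 1 * y 1 + x 2 * y 2) +
    B * (x 0 * y 1 + x 0 * y 2 + x 1 * y 0 + x 1 * y 2 + x 2 * y 0 + x 2 * y 1)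

/-- The structure `q`, given by `q(x¹,x²,x³) = (-x²,-x³,-x¹)`. -/
def q (x : Fin 3 → ℝ) : Fin 3 → ℝ := ![-(x 1), -(x 2), -(x 0)]

/-- for `A > B > 0`, the vector
`x = (0, -(A+B) + √((A-B)(A+3B)), 2B)` induces a `q`-basis of `ℝ³` which is orthogonal
with respect to `g`. -/
theorem example_orthogonal_q_basis (A B : ℝ) (hAB : A > B) (hB : B > 0) :
    let x : Fin 3 → ℝ := ![0, -(A + B) + Real.sqrt ((A - B) * (A + 3 * B)), 2 * B]
    LinearIndependent ℝ ![x, q x, q (q x)] ∧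
      g A B x (q x) = 0 ∧ g A B x (q (q x)) = 0 ∧ g A B (q x) (q (q x)) = 0 := by
  intro x
  set s := Real.sqrt ((A - B) * (A + 3 * B)) with hs
  have hnn : (0:ℝ) ≤ (A - B) * (A + 3 * B) := by nlinarith
  have hs2 : s * s = (A - B) * (A + 3 * B) := Real.mul_self_sqrt hnn
  have hsgt : s > A - B := by
    nlinarith [Real.sqrt_nonneg ((A - B) * (A + 3 * B))]
  refine ⟨?_, ?_, ?_, ?_⟩
  · rw [show (![x, q x, q (q x)] : Fin 3 → Fin 3 → ℝ)
        = Matrix.row (Matrix.of ![x, q x, q (q x)]) from rfl,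
      Matrix.linearIndependent_rows_iff_isUnit, Matrix.isUnit_iff_isUnit_det,
      isUnit_iff_ne_zero]
    simp only [Matrix.det_fin_three, Matrix.of_apply, x, q, Matrix.cons_val_zero, Matrix.cons_val_one,
      Matrix.head_cons, Matrix.cons_val_two, Matrix.tail_cons]
    intro h
    have ht : (-(A+B)+s) + 2*B > 0 := by linarith
    have hq : (-(A+B)+s)^2 - 2*B*(-(A+B)+s) + 4*B^2 > 0 := by
      nlinarith [sq_nonneg ((-(A+B)+s) - B)]
    rw [← hs] at h
    nlinarith [mul_pos ht hq]
  all_goals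
    simp only [g, q, x, Matrix.cons_val_zero, Matrix.cons_val_one, Matrix.head_cons,
      Matrix.cons_val_two, Matrix.tail_cons]
    nlinarith [hs2]
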